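/- The function K(x,y,t) = √(ω/(4πi sin(ωt))) · exp(−(ω/(4i sin(ωt)))(x² cos(ωt) + y² cos(ωt) − 2xy)) satisfies the Schrödinger equation i ∂K/∂t = −∂²K/∂x² + (1/4)ω²x² K for 0 < t < π/ω. -/

import Mathlib

open Complex in
/-- The harmonic-oscillator propagator satisfies the Schrödinger equation
`i ∂K/∂t = -∂²K/∂x² + (1/4)ω²x² K` for `0 < t < π/ω` (ℏ = 1, m = 1/2). -/
theorem stmt_5 (ω : ℝ) (hω : 0 < ω) :
    let K : ℝ → ℝ → ℝ → ℂ := fun x y t =>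
      ((ω : ℂ) / (4 * (π : ℂ) * Complex.I * Complex.sin (ω * t))) ^ ((1:ℂ)/2) *
        Complex.exp (-((ω : ℂ) / (4 * Complex.I * Complex.sin (ω * t))) *
          ((x:ℂ)^2 * Complex.cos (ω * t) + (y:ℂ)^2 * Complex.cos (ω * t) - 2 * x * y))
    ∀ x y t : ℝ, 0 < t → t < Real.pi / ω →
      Complex.I * deriv (fun t' : ℝ => K x y t') t
        = -(deriv (deriv (fun x' : ℝ => K x' y t)) x) + (1/4) * (ω:ℂ)^2 * (x:ℂ)^2 * K x y t := by
  intro K x y t ht htu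
  have hsin : ∀ t' : ℝ, Complex.sin ((ω:ℂ) * t') = ((Real.sin (ω * t') : ℝ) : ℂ) := by
    intro t'; push_cast; ring
  have hcos : ∀ t' : ℝ, Complex.cos ((ω:ℂ) * t') = ((Real.cos (ω * t') : ℝ) : ℂ) := by
    intro t'; push_cast; ring
  simp only [K, hsin, hcos]
  rcases eq_or_ne π 0 with hπ | hπ
  · simp only [hπ, mul_zero, zero_mul, div_zero,
      Complex.zero_cpow (show ((1:ℂ)/2) ≠ 0 by norm_num), zero_mul, deriv_const',
      mul_zero, neg_zero, zero_add]
  · -- main case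
    have hωt0 : 0 < ω * t := mul_pos hω ht
    have hωtπ : ω * t < Real.pi := by
      rw [lt_div_iff₀ hω] at htu; linarith
    have hsr : 0 < Real.sin (ω * t) := Real.sin_pos_of_pos_of_lt_pi hωt0 hωtπ
    have hsrC : ((Real.sin (ω * t) : ℝ) : ℂ) ≠ 0 := by exact_mod_cast hsr.ne'
    have hωC : ((ω : ℝ) : ℂ) ≠ 0 := by exact_mod_cast hω.ne'
    have hIne : (Complex.I) ≠ 0 := Complex.I_ne_zero
    have h4Is : (4 : ℂ) * Complex.I * ((Real.sin (ω * t) : ℝ) : ℂ) ≠ 0 :=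
      mul_ne_zero (mul_ne_zero (by norm_num) hIne) hsrC
    have hCoe : ∀ a : ℝ, HasDerivAt (fun a : ℝ => (a : ℂ)) 1 a := by
      intro a
      simpa using (hasDerivAt_id a).ofReal_comp
    -- x-derivatives
    have hBx : ∀ x' : ℝ, HasDerivAt
        (fun a : ℝ => -((ω:ℂ) / (4 * Complex.I * ((Real.sin (ω * t) : ℝ) : ℂ))) *
          ((a:ℂ)^2 * ((Real.cos (ω * t) : ℝ) : ℂ) + (y:ℂ)^2 * ((Real.cos (ω * t) : ℝ) : ℂ) - 2 * a * y))
        (-((ω:ℂ) / (4 * Complex.I * ((Real.sin (ω * t) : ℝ) : ℂ))) *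
          (2 * (x':ℂ) * ((Real.cos (ω * t) : ℝ) : ℂ) - 2 * (y:ℂ))) x' := by
      intro x'
      have hsq : HasDerivAt (fun a : ℝ => ((a:ℂ))^2) (2*((x':ℝ):ℂ)) x' := by
        simpa [pow_two, two_mul, Pi.mul_def] using (hCoe x').mul (hCoe x')
      have hP : HasDerivAt (fun a : ℝ => ((a:ℂ)^2 * ((Real.cos (ω * t) : ℝ) : ℂ)
          + (y:ℂ)^2 * ((Real.cos (ω * t) : ℝ) : ℂ) - 2 * a * y))
          (2 * (x':ℂ) * ((Real.cos (ω * t) : ℝ) : ℂ) - 2 * (y:ℂ)) x' := by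
        have := ((hsq.mul_const ((Real.cos (ω * t) : ℝ) : ℂ)).add_const
            ((y:ℂ)^2 * ((Real.cos (ω * t) : ℝ) : ℂ))).sub
          (((hCoe x').const_mul (2:ℂ)).mul_const ((y:ℝ):ℂ))
        convert this using 1
        · rfl
        · funext a; simp only [Pi.sub_apply]
        ring
      exact hP.const_mul _
    have hKx : ∀ x' : ℝ, HasDerivAt
        (fun a : ℝ => ((ω : ℂ) / (4 * π * Complex.I * ((Real.sin (ω * t) : ℝ) : ℂ))) ^ ((1:ℂ)/2) *
          Complex.exp (-((ω:ℂ) / (4 * Complex.I * ((Real.sin (ω * t) : ℝ) : ℂ))) *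
          ((a:ℂ)^2 * ((Real.cos (ω * t) : ℝ) : ℂ) + (y:ℂ)^2 * ((Real.cos (ω * t) : ℝ) : ℂ) - 2 * a * y)))
        (((ω : ℂ) / (4 * π * Complex.I * ((Real.sin (ω * t) : ℝ) : ℂ))) ^ ((1:ℂ)/2) *
          (Complex.exp (-((ω:ℂ) / (4 * Complex.I * ((Real.sin (ω * t) : ℝ) : ℂ))) *
          ((x':ℂ)^2 * ((Real.cos (ω * t) : ℝ) : ℂ) + (y:ℂ)^2 * ((Real.cos (ω * t) : ℝ) : ℂ) - 2 * x' * y))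
          * (-((ω:ℂ) / (4 * Complex.I * ((Real.sin (ω * t) : ℝ) : ℂ))) *
          (2 * (x':ℂ) * ((Real.cos (ω * t) : ℝ) : ℂ) - 2 * (y:ℂ))))) x' :=
      fun x' => ((hBx x').cexp).const_mul _
    have hd1 : (deriv fun x' : ℝ =>
        ((ω : ℂ) / (4 * π * Complex.I * ((Real.sin (ω * t) : ℝ) : ℂ))) ^ ((1:ℂ)/2) *
          Complex.exp (-((ω:ℂ) / (4 * Complex.I * ((Real.sin (ω * t) : ℝ) : ℂ))) *
          ((x':ℂ)^2 * ((Real.cos (ω * t) : ℝ) : ℂ) + (y:ℂ)^2 * ((Real.cos (ω * t) : ℝ) : ℂ) - 2 * x' * y)))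
        = fun x' : ℝ =>
        (((ω : ℂ) / (4 * π * Complex.I * ((Real.sin (ω * t) : ℝ) : ℂ))) ^ ((1:ℂ)/2) *
          (Complex.exp (-((ω:ℂ) / (4 * Complex.I * ((Real.sin (ω * t) : ℝ) : ℂ))) *
          ((x':ℂ)^2 * ((Real.cos (ω * t) : ℝ) : ℂ) + (y:ℂ)^2 * ((Real.cos (ω * t) : ℝ) : ℂ) - 2 * x' * y))
          * (-((ω:ℂ) / (4 * Complex.I * ((Real.sin (ω * t) : ℝ) : ℂ))) *
          (2 * (x':ℂ) * ((Real.cos (ω * t) : ℝ) : ℂ) - 2 * (y:ℂ))))) :=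
      funext fun x' => (hKx x').deriv
    have hlin : HasDerivAt (fun a : ℝ =>
        (-((ω:ℂ) / (4 * Complex.I * ((Real.sin (ω * t) : ℝ) : ℂ))) *
          (2 * (a:ℂ) * ((Real.cos (ω * t) : ℝ) : ℂ) - 2 * (y:ℂ))))
        (-((ω:ℂ) / (4 * Complex.I * ((Real.sin (ω * t) : ℝ) : ℂ))) *
          (2 * ((Real.cos (ω * t) : ℝ) : ℂ))) x := by
      have := ((((hCoe x).const_mul (2:ℂ)).mul_const ((Real.cos (ω * t) : ℝ) : ℂ)).sub_const
        (2 * (y:ℂ))).const_mul (-((ω:ℂ) / (4 * Complex.I * ((Real.sin (ω * t) : ℝ) : ℂ))))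
      convert this using 1
      · rfl
      ring
    have hKxx := (((hBx x).cexp).mul hlin).const_mul
      (((ω : ℂ) / (4 * π * Complex.I * ((Real.sin (ω * t) : ℝ) : ℂ))) ^ ((1:ℂ)/2))
    -- t-derivative
    have hu : ((4:ℂ) * π * Complex.I)⁻¹ ≠ 0 :=
      inv_ne_zero (mul_ne_zero (mul_ne_zero (by norm_num) hπ) hIne)
    have key : ∀ t' : ℝ, 0 < Real.sin (ω * t') →
        ((ω : ℂ) / (4 * π * Complex.I * ((Real.sin (ω * t') : ℝ) : ℂ))) ^ ((1:ℂ)/2)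
        = Complex.exp (((1:ℂ)/2) * ((Real.log (ω / Real.sin (ω * t')) : ℝ) : ℂ))
          * (((4:ℂ) * π * Complex.I)⁻¹) ^ ((1:ℂ)/2) := by
      intro t' h
      have hb : 0 < ω / Real.sin (ω * t') := div_pos hω h
      have hsC : ((Real.sin (ω * t') : ℝ) : ℂ) ≠ 0 := by exact_mod_cast h.ne'
      have hzeq : ((ω : ℂ) / (4 * π * Complex.I * ((Real.sin (ω * t') : ℝ) : ℂ)))
          = ((ω / Real.sin (ω * t') : ℝ) : ℂ) * ((4:ℂ) * π * Complex.I)⁻¹ := by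
        push_cast
        field_simp
      rw [hzeq, Complex.cpow_def_of_ne_zero (mul_ne_zero (by exact_mod_cast hb.ne') hu),
        Complex.log_ofReal_mul hb hu, Complex.cpow_def_of_ne_zero hu, add_mul,
        Complex.exp_add]
      rw [mul_comm (((Real.log (ω / Real.sin (ω * t')) : ℝ) : ℂ)) ((1:ℂ)/2)]
    have heq : (fun t' : ℝ =>
        ((ω : ℂ) / (4 * π * Complex.I * ((Real.sin (ω * t') : ℝ) : ℂ))) ^ ((1:ℂ)/2))
        =ᶠ[nhds t] (fun t' : ℝ =>
          Complex.exp (((1:ℂ)/2) * ((Real.log (ω / Real.sin (ω * t')) : ℝ) : ℂ)) *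
            (((4:ℂ) * π * Complex.I)⁻¹) ^ ((1:ℂ)/2)) := by
      have hmem : Set.Ioo (0:ℝ) (Real.pi / ω) ∈ nhds t := isOpen_Ioo.mem_nhds ⟨ht, htu⟩
      filter_upwards [hmem] with t' ht'
      exact key t' (Real.sin_pos_of_pos_of_lt_pi (mul_pos hω ht'.1)
        (by nlinarith [(lt_div_iff₀ hω).mp ht'.2]))
    have hsinR : HasDerivAt (fun t' : ℝ => Real.sin (ω * t')) (Real.cos (ω * t) * ω) t := by
      simpa [Function.comp_def] using (Real.hasDerivAt_sin (ω * t)).comp t ((hasDerivAt_id t).const_mul ω)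
    have hcosR : HasDerivAt (fun t' : ℝ => Real.cos (ω * t')) (-Real.sin (ω * t) * ω) t := by
      simpa [Function.comp_def] using (Real.hasDerivAt_cos (ω * t)).comp t ((hasDerivAt_id t).const_mul ω)
    have hq : HasDerivAt (fun t' : ℝ => ω / Real.sin (ω * t'))
        ((0 * Real.sin (ω * t) - ω * (Real.cos (ω * t) * ω)) / Real.sin (ω * t) ^ 2) t :=
      (hasDerivAt_const t ω).div hsinR hsr.ne'
    have hlogb := hq.log (div_pos hω hsr).ne'
    have hF := (((hlogb.ofReal_comp).const_mul ((1:ℂ)/2)).cexp).mul_const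
      ((((4:ℂ) * π * Complex.I)⁻¹) ^ ((1:ℂ)/2))
    have hAt := hF.congr_of_eventuallyEq heq
    have hsinC := hsinR.ofReal_comp
    have hcosC := hcosR.ofReal_comp
    have hcoef : HasDerivAt
        (fun t' : ℝ => -((ω:ℂ) / (4 * Complex.I * ((Real.sin (ω * t') : ℝ) : ℂ))))
        (-((0 * (4 * Complex.I * ((Real.sin (ω * t) : ℝ) : ℂ)) -
            (ω:ℂ) * (4 * Complex.I * ((Real.cos (ω * t) * ω : ℝ) : ℂ))) /
          (4 * Complex.I * ((Real.sin (ω * t) : ℝ) : ℂ)) ^ 2)) t :=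
      ((hasDerivAt_const t ((ω:ℝ):ℂ)).div (hsinC.const_mul (4 * Complex.I)) h4Is).neg
    have hPt : HasDerivAt (fun t' : ℝ =>
        ((x:ℂ)^2 * ((Real.cos (ω * t') : ℝ) : ℂ) + (y:ℂ)^2 * ((Real.cos (ω * t') : ℝ) : ℂ) - 2 * x * y))
        ((x:ℂ)^2 * ((-Real.sin (ω * t) * ω : ℝ) : ℂ) + (y:ℂ)^2 * ((-Real.sin (ω * t) * ω : ℝ) : ℂ)) t := by
      have := ((hcosC.const_mul ((x:ℂ)^2)).add (hcosC.const_mul ((y:ℂ)^2))).sub_const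
        (2 * (x:ℂ) * (y:ℂ))
      convert this using 1
      · rfl
      rfl
    have hKt := hAt.mul (hcoef.mul hPt).cexp
    simp only [Pi.mul_def] at hKt hKxx
    rw [hKt.deriv, hd1, hKxx.deriv]
    rw [key t hsr]
    have pyth : Complex.sin ((ω:ℂ) * t)^2 + Complex.cos ((ω:ℂ) * t)^2 = 1 :=
      Complex.sin_sq_add_cos_sq _
    have hIsq : Complex.I ^ 2 = -1 := Complex.I_sq
    have hsC2 : Complex.sin ((ω:ℂ) * t) ≠ 0 := by rw [hsin]; exact hsrC
    push_cast
    field_simp [hsC2, hIne, hπ, hωC]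
    have h4Is' : (4:ℂ) * Complex.I * Complex.sin ((ω:ℂ)*t) ≠ 0 :=
      mul_ne_zero (mul_ne_zero (by norm_num) hIne) hsC2
    have hD1 : (2 * (Complex.sin ((ω:ℂ)*t)^2 * (ω:ℂ)) *
        ((4*Complex.I*Complex.sin ((ω:ℂ)*t))^2 * (4*Complex.I*Complex.sin ((ω:ℂ)*t)))) ≠ 0 :=
      mul_ne_zero (mul_ne_zero two_ne_zero (mul_ne_zero (pow_ne_zero 2 hsC2) hωC))
        (mul_ne_zero (pow_ne_zero 2 h4Is') h4Is')
    have hD2 : (4*Complex.I*Complex.sin ((ω:ℂ)*t) * (4*Complex.I*Complex.sin ((ω:ℂ)*t)) *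
        (4*Complex.I*Complex.sin ((ω:ℂ)*t))) ≠ 0 :=
      mul_ne_zero (mul_ne_zero h4Is' h4Is') h4Is'
    rw [hIsq]
    linear_combination (-8 * (ω:ℂ)^3 * (y:ℂ)^2) * pyth
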